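/- For the binomial-type stationary distribution π^V(x_A, x_B) = (1/Z^V) · C(VM, x_A) · (κ₂/(κ₁+κ₂))^{x_A} · (κ₁/(κ₁+κ₂))^{x_B} with normalizing constant Z^V = 1 − (κ₁/(κ₁+κ₂))^{VM}, if x̃^V = (x̃_A^V, x̃_B^V) ∈ (1/V)·Γ^V satisfies x̃^V → x̃ ∈ ℝ²_{>0} as V → ∞ (along a sequence with VM ∈ ℤ), then −(1/V)·ln(π^V(V·x̃^V)) converges to x̃_A(ln x̃_A − ln(κ₂/(κ₁+κ₂))) + x̃_B(ln x̃_B − ln(κ₁/(κ₁+κ₂))) − M ln M. -/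

import Mathlib

open Filter Real

/-- Scaling limit of the non-equilibrium potential for the binomial-type stationary
distribution of the network `2A ⇌ A+B`. -/
theorem stmt_0 (κ₁ κ₂ M : ℝ) (hκ₁ : 0 < κ₁) (hκ₂ : 0 < κ₂) (hM : 0 < M)
    (V : ℕ → ℝ) (hV : Tendsto V atTop atTop) (hVpos : ∀ n, 0 < V n)
    (N : ℕ → ℕ) (hN : ∀ n, (N n : ℝ) = V n * M)   -- VM ∈ ℤ
    (xA xB : ℕ → ℕ)
    (hmem : ∀ n, 1 ≤ xA n ∧ xA n + xB n = N n)    -- (xA, xB) ∈ Γ^V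
    (xtA xtB : ℝ) (hxtA : 0 < xtA) (hxtB : 0 < xtB)
    (hA : Tendsto (fun n => (xA n : ℝ) / V n) atTop (nhds xtA))
    (hB : Tendsto (fun n => (xB n : ℝ) / V n) atTop (nhds xtB)) :
    Tendsto
      (fun n =>
        -(1 / V n) * Real.log
          ((1 / (1 - (κ₁ / (κ₁ + κ₂)) ^ (N n))) * (Nat.choose (N n) (xA n)) *
            (κ₂ / (κ₁ + κ₂)) ^ (xA n) * (κ₁ / (κ₁ + κ₂)) ^ (xB n)))
      atTop
      (nhds (xtA * (Real.log xtA - Real.log (κ₂ / (κ₁ + κ₂)))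
        + xtB * (Real.log xtB - Real.log (κ₁ / (κ₁ + κ₂))) - M * Real.log M)) := by
  set p : ℝ := κ₂ / (κ₁ + κ₂) with hpdef
  set q : ℝ := κ₁ / (κ₁ + κ₂) with hqdef
  have hκ : 0 < κ₁ + κ₂ := by linarith
  have hp0 : 0 < p := div_pos hκ₂ hκ
  have hq0 : 0 < q := div_pos hκ₁ hκ
  have hq1 : q < 1 := by
    rw [hqdef, div_lt_one hκ]; linarith
  -- basic divergences
  have hV1 : Tendsto (fun n => 1 / V n) atTop (nhds (0:ℝ)) := by
    exact hV.inv_tendsto_atTop.congr fun n => by simp [one_div]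
  have hNat : Tendsto (fun n => (N n : ℝ)) atTop atTop := by
    have : Tendsto (fun n => V n * M) atTop atTop := hV.atTop_mul_const hM
    exact this.congr fun n => (hN n).symm
  have hNinf : Tendsto N atTop atTop := tendsto_natCast_atTop_iff.mp hNat
  have hxAr : Tendsto (fun n => (xA n : ℝ)) atTop atTop := by
    have : Tendsto (fun n => ((xA n : ℝ) / V n) * V n) atTop atTop :=
      Filter.Tendsto.pos_mul_atTop hxtA hA hV
    exact this.congr fun n => div_mul_cancel₀ _ (hVpos n).ne'
  have hxBr : Tendsto (fun n => (xB n : ℝ)) atTop atTop := by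
    have : Tendsto (fun n => ((xB n : ℝ) / V n) * V n) atTop atTop :=
      Filter.Tendsto.pos_mul_atTop hxtB hB hV
    exact this.congr fun n => div_mul_cancel₀ _ (hVpos n).ne'
  have hxAinf : Tendsto xA atTop atTop := tendsto_natCast_atTop_iff.mp hxAr
  have hxBinf : Tendsto xB atTop atTop := tendsto_natCast_atTop_iff.mp hxBr
  have hxB1 : ∀ᶠ n in atTop, 1 ≤ xB n := hxBinf.eventually_ge_atTop 1
  have hxAleN : ∀ n, xA n ≤ N n := fun n => (hmem n).2 ▸ Nat.le_add_right _ _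
  have hxBleN : ∀ n, xB n ≤ N n := fun n => (hmem n).2 ▸ Nat.le_add_left _ _
  have hN1 : ∀ n, 1 ≤ N n := fun n => le_trans (hmem n).1 (hxAleN n)
  -- log t / t → 0 along V
  have hlogV : Tendsto (fun n => Real.log (V n) / V n) atTop (nhds 0) :=
    (Real.isLittleO_log_id_atTop.tendsto_div_nhds_zero).comp hV
  have hlog2MV : Tendsto (fun n => (1 / V n) * Real.log (2 * M * V n)) atTop (nhds 0) := by
    have h1 : Tendsto (fun n => Real.log (2 * M) * (1 / V n) + Real.log (V n) / V n)
        atTop (nhds 0) := by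
      simpa using (hV1.const_mul (Real.log (2 * M))).add hlogV
    refine (h1.congr fun n => ?_)
    rw [Real.log_mul (by positivity) (hVpos n).ne']
    field_simp
  -- half-log terms
  have hhalf : ∀ m : ℕ → ℕ, (∀ᶠ n in atTop, 1 ≤ m n) → (∀ n, m n ≤ N n) →
      Tendsto (fun n => (1 / V n) * (1/2 * Real.log (2 * (m n : ℝ)))) atTop (nhds 0) := by
    intro m hm1 hmN
    have hupper : Tendsto (fun n => (1 / V n) * (1/2 * Real.log (2 * M * V n))) atTop (nhds 0) := by
      simpa using (hlog2MV.const_mul (1/2 : ℝ)).congr fun n => by ring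
    refine tendsto_of_tendsto_of_tendsto_of_le_of_le' tendsto_const_nhds hupper ?_ ?_
    · filter_upwards [hm1] with n hn
      have h2m : (1:ℝ) ≤ 2 * (m n : ℝ) := by
        have : (1:ℝ) ≤ (m n : ℝ) := by exact_mod_cast hn
        linarith
      have hln := Real.log_nonneg h2m
      have hv0 : (0:ℝ) < V n := hVpos n
      positivity
    · filter_upwards [hm1] with n hn
      have hmn0 : (0:ℝ) < (m n : ℝ) := by exact_mod_cast hn
      have hle : (2 * (m n : ℝ)) ≤ 2 * M * V n := by
        have : (m n : ℝ) ≤ (N n : ℝ) := by exact_mod_cast hmN n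
        rw [hN n] at this; nlinarith
      have hlog : Real.log (2 * (m n : ℝ)) ≤ Real.log (2 * M * V n) :=
        Real.log_le_log (by linarith) hle
      have h1V : 0 ≤ 1 / V n := by
        have := hVpos n; positivity
      nlinarith
  -- stirling terms
  have hsqrtpi : Real.sqrt π ≠ 0 := by positivity
  have hstir : ∀ m : ℕ → ℕ, Tendsto m atTop atTop → (∀ᶠ n in atTop, 1 ≤ m n) →
      (∀ n, m n ≤ N n) →
      Tendsto (fun n => (1 / V n) * (Real.log (Stirling.stirlingSeq (m n))
        + 1/2 * Real.log (2 * (m n : ℝ)))) atTop (nhds 0) := by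
    intro m hminf hm1 hmN
    have h1 : Tendsto (fun n => (1 / V n) * Real.log (Stirling.stirlingSeq (m n)))
        atTop (nhds 0) := by
      have : Tendsto (fun n => Real.log (Stirling.stirlingSeq (m n))) atTop
          (nhds (Real.log (Real.sqrt π))) :=
        (Stirling.tendsto_stirlingSeq_sqrt_pi.comp hminf).log hsqrtpi
      simpa using hV1.mul this
    have := h1.add (hhalf m hm1 hmN)
    simp only [add_zero] at this
    exact this.congr fun n => by ring
  have TgN := hstir N hNinf (Eventually.of_forall hN1) fun n => le_rfl
  have TgA := hstir xA hxAinf (Eventually.of_forall fun n => (hmem n).1) hxAleN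
  have TgB := hstir xB hxBinf hxB1 hxBleN
  -- partition function term
  have T1 : Tendsto (fun n => (1 / V n) * Real.log (1 - q ^ N n)) atTop (nhds 0) := by
    have hqN : Tendsto (fun n => q ^ N n) atTop (nhds 0) :=
      (tendsto_pow_atTop_nhds_zero_of_lt_one hq0.le hq1).comp hNinf
    have h1 : Tendsto (fun n => (1:ℝ) - q ^ N n) atTop (nhds 1) := by
      simpa using (tendsto_const_nhds (x := (1:ℝ)) (f := atTop)).sub hqN
    have : Tendsto (fun n => Real.log (1 - q ^ N n)) atTop (nhds (Real.log 1)) :=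
      h1.log one_ne_zero
    simpa using hV1.mul this
  -- entropy terms
  have T3A : Tendsto (fun n => ((xA n : ℝ) / V n) * Real.log ((xA n : ℝ) / V n))
      atTop (nhds (xtA * Real.log xtA)) := hA.mul (hA.log hxtA.ne')
  have T3B : Tendsto (fun n => ((xB n : ℝ) / V n) * Real.log ((xB n : ℝ) / V n))
      atTop (nhds (xtB * Real.log xtB)) := hB.mul (hB.log hxtB.ne')
  have T4A : Tendsto (fun n => ((xA n : ℝ) / V n) * Real.log p) atTop
      (nhds (xtA * Real.log p)) := hA.mul_const _
  have T4B : Tendsto (fun n => ((xB n : ℝ) / V n) * Real.log q) atTop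
      (nhds (xtB * Real.log q)) := hB.mul_const _
  -- combined limit of the decomposition
  have Tmain : Tendsto (fun n =>
      (1 / V n) * Real.log (1 - q ^ N n)
      - ((1 / V n) * (Real.log (Stirling.stirlingSeq (N n)) + 1/2 * Real.log (2 * (N n : ℝ)))
        - (1 / V n) * (Real.log (Stirling.stirlingSeq (xA n)) + 1/2 * Real.log (2 * (xA n : ℝ)))
        - (1 / V n) * (Real.log (Stirling.stirlingSeq (xB n)) + 1/2 * Real.log (2 * (xB n : ℝ))))
      - M * Real.log M
      + ((xA n : ℝ) / V n) * Real.log ((xA n : ℝ) / V n)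
      + ((xB n : ℝ) / V n) * Real.log ((xB n : ℝ) / V n)
      - ((xA n : ℝ) / V n) * Real.log p
      - ((xB n : ℝ) / V n) * Real.log q) atTop
      (nhds (0 - (0 - 0 - 0) - M * Real.log M + xtA * Real.log xtA + xtB * Real.log xtB
        - xtA * Real.log p - xtB * Real.log q)) := by
    exact ((((((T1.sub ((TgN.sub TgA).sub TgB)).sub tendsto_const_nhds).add T3A).add
      T3B).sub T4A).sub T4B)
  have hlim : (0 - (0 - 0 - 0) - M * Real.log M + xtA * Real.log xtA + xtB * Real.log xtB
      - xtA * Real.log p - xtB * Real.log q)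
      = (xtA * (Real.log xtA - Real.log p) + xtB * (Real.log xtB - Real.log q)
        - M * Real.log M) := by ring
  rw [hlim] at Tmain
  refine Tmain.congr' ?_
  filter_upwards [hxB1] with n hb1
  -- now prove the pointwise identity
  set v := V n with hvdef
  have hv : 0 < v := hVpos n
  have ha1 : 1 ≤ xA n := (hmem n).1
  have hNn : xA n + xB n = N n := (hmem n).2
  have ha0 : (0:ℝ) < (xA n : ℝ) := by exact_mod_cast ha1
  have hb0 : (0:ℝ) < (xB n : ℝ) := by exact_mod_cast hb1
  have hNr0 : (0:ℝ) < (N n : ℝ) := by exact_mod_cast hN1 n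
  have hZ : (0:ℝ) < 1 - q ^ N n := by
    have : q ^ N n < 1 := pow_lt_one₀ hq0.le hq1 (by omega)
    linarith
  have hC0 : (0:ℝ) < (Nat.choose (N n) (xA n) : ℝ) := by
    exact_mod_cast Nat.choose_pos (hxAleN n)
  -- log factorial formula
  have hfac : ∀ m : ℕ, 1 ≤ m → Real.log (Nat.factorial m : ℝ)
      = Real.log (Stirling.stirlingSeq m) + 1/2 * Real.log (2 * (m:ℝ))
        + (m:ℝ) * (Real.log ((m:ℝ) / v) + Real.log v) - (m:ℝ) := by
    intro m hm
    have hm0 : (0:ℝ) < (m:ℝ) := by exact_mod_cast hm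
    have hs := Stirling.log_stirlingSeq_formula m
    have hle : Real.log ((m:ℝ) / Real.exp 1) = Real.log (m:ℝ) - 1 := by
      rw [Real.log_div hm0.ne' (Real.exp_ne_zero 1), Real.log_exp]
    have hlm : Real.log (m:ℝ) = Real.log ((m:ℝ) / v) + Real.log v := by
      rw [Real.log_div hm0.ne' hv.ne', sub_add_cancel]
    linear_combination -hs + (m:ℝ) * hle + (m:ℝ) * hlm
  -- log of the binomial coefficient
  have hCfac : Real.log (Nat.choose (N n) (xA n) : ℝ)
      = Real.log (Nat.factorial (N n) : ℝ) - Real.log (Nat.factorial (xA n) : ℝ) - Real.log (Nat.factorial (xB n) : ℝ) := by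
    have h := Nat.choose_mul_factorial_mul_factorial (hxAleN n)
    have h2 : (N n) - (xA n) = xB n := by omega
    rw [h2] at h
    have hcast : (Nat.choose (N n) (xA n) : ℝ) * Nat.factorial (xA n) * Nat.factorial (xB n) = (Nat.factorial (N n) : ℝ) := by
      exact_mod_cast congrArg (Nat.cast : ℕ → ℝ) h
    have hfa : (0:ℝ) < (Nat.factorial (xA n) : ℝ) := by exact_mod_cast (xA n).factorial_pos
    have hfb : (0:ℝ) < (Nat.factorial (xB n) : ℝ) := by exact_mod_cast (xB n).factorial_pos
    have := congrArg Real.log hcast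
    rw [Real.log_mul (by positivity) hfb.ne', Real.log_mul hC0.ne' hfa.ne'] at this
    linarith
  -- split the big log
  have hsplit : Real.log ((1 / (1 - q ^ N n)) * (Nat.choose (N n) (xA n) : ℝ)
        * p ^ (xA n) * q ^ (xB n))
      = -Real.log (1 - q ^ N n) + Real.log (Nat.choose (N n) (xA n) : ℝ)
        + (xA n : ℝ) * Real.log p + (xB n : ℝ) * Real.log q := by
    rw [Real.log_mul (by positivity) (by positivity),
        Real.log_mul (by positivity) (by positivity),
        Real.log_mul (by positivity) hC0.ne',
        Real.log_pow, Real.log_pow, one_div, Real.log_inv]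
  -- assemble
  have hab : (xA n : ℝ) + (xB n : ℝ) = (N n : ℝ) := by exact_mod_cast hNn
  have hM' : M = ((xA n : ℝ) + (xB n : ℝ)) / v := by
    rw [hab, hN n]; field_simp; exact hvdef
  rw [hsplit, hCfac, hfac _ (hN1 n), hfac _ ha1, hfac _ hb1, ← hab, hM']
  field_simp
  ring
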